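/- Let G be a finite group and let G₀ ⊆ G₁ ⊆ G be subgroups. If (G₁, G₀) is an admissible pair and (G, G₁) is an admissible pair, then (G, G₀) is an admissible pair. -/

import Mathlib

open CategoryTheory

/-- The pair `(G, H)` is *admissible* if for every irreducible complex representation `τ`
of `H` with character `χ_τ`, every `g ∈ H` and every `s ∈ G` with `s g s⁻¹ ∈ H`, one has
`χ_τ(s g s⁻¹) = χ_τ(g)`. -/
def IsAdmissiblePair (G : Type) [Group G] (H : Subgroup G) : Prop :=
  ∀ (τ : FDRep ℂ H), Simple τ →
    ∀ (g : H) (s : G) (hs : s * (g : G) * s⁻¹ ∈ H),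
      τ.character ⟨s * (g : G) * s⁻¹, hs⟩ = τ.character g

section Aux

variable {H : Type} [Monoid H]

lemma simple_of_invariant {V : Type} [AddCommGroup V] [Module ℂ V] [FiniteDimensional ℂ V]
    [Nontrivial V] (ρ : Representation ℂ H V)
    (hinv : ∀ U : Submodule ℂ V, (∀ (h : H) (v : V), v ∈ U → ρ h v ∈ U) → U = ⊥ ∨ U = ⊤) :
    Simple (FDRep.of ρ) := by
  constructor
  intro Y f hf
  let F : (Y : Type) →ₗ[ℂ] V := f.hom.hom.hom
  have hcomm : ∀ (h : H), F ∘ₗ Y.ρ h = ρ h ∘ₗ F := fun h => LinearMap.ext fun w => congrArg (fun m => m.hom.hom w) (f.comm h)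
  have hcomm' : ∀ (h : H) (w : Y), F (Y.ρ h w) = ρ h (F w) := by
    intro h w
    exact DFunLike.congr_fun (hcomm h) w
  constructor
  · rintro hiso rfl
    obtain ⟨v, hv⟩ := exists_ne (0 : V)
    apply hv
    have h1 : inv (0 : Y ⟶ FDRep.of ρ) ≫ (0 : Y ⟶ FDRep.of ρ) = 𝟙 (FDRep.of ρ) :=
      IsIso.inv_hom_id _
    have := congrArg (fun m : FDRep.of ρ ⟶ FDRep.of ρ => m.hom v) h1
    exact this.symm
  · intro hne
    have hker : LinearMap.ker F = ⊥ := by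
      have hKinv : ∀ (h : H) (v : Y), v ∈ LinearMap.ker F → Y.ρ h v ∈ LinearMap.ker F := by
        intro h v hv
        simp only [LinearMap.mem_ker] at hv ⊢
        rw [hcomm' h v, hv, map_zero]
      let ρK : Representation ℂ H (LinearMap.ker F) :=
        { toFun := fun h => (Y.ρ h).restrict (fun v hv => hKinv h v hv)
          map_one' := by
            ext v
            simp [LinearMap.restrict_apply]
          map_mul' := fun a b => by
            ext v
            simp only [LinearMap.restrict_coe_apply, Module.End.mul_apply, map_mul] }
      let ι : FDRep.of ρK ⟶ Y :=
        { hom := FGModuleCat.ofHom (LinearMap.ker F).subtype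
          comm := fun h => rfl }
      have hcomp : ι ≫ f = (0 : FDRep.of ρK ⟶ Y) ≫ f := by
        apply Action.hom_ext
        ext ⟨v, hv⟩
        simp; exact hv
      have hι : ι = 0 := (cancel_mono f).mp hcomp
      ext v
      simp only [Submodule.mem_bot]
      constructor
      · intro hv
        have := congrArg (fun m : FDRep.of ρK ⟶ Y => m.hom ⟨v, hv⟩) hι
        exact this
      · rintro rfl
        exact (LinearMap.ker F).zero_mem
    have hstab : ∀ (h : H) (v : V), v ∈ LinearMap.range F → ρ h v ∈ LinearMap.range F := by
      rintro h v ⟨w, rfl⟩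
      exact ⟨Y.ρ h w, hcomm' h w⟩
    have hrange : LinearMap.range F = ⊤ := by
      rcases hinv (LinearMap.range F) hstab with h | h
      · exfalso; apply hne
        apply Action.hom_ext
        ext v
        have : F v ∈ LinearMap.range F := ⟨v, rfl⟩
        rw [h] at this
        simpa [F] using this
      · exact h
    have hbij : Function.Bijective F :=
      ⟨LinearMap.ker_eq_bot.mp hker, LinearMap.range_eq_top.mp hrange⟩
    let e := LinearEquiv.ofBijective (F : (Y : Type) →ₗ[ℂ] V) hbij
    let einv : V →ₗ[ℂ] (Y : Type) := e.symm.toLinearMap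
    have he : ∀ v : V, F (e.symm v) = v := fun v => e.apply_symm_apply v
    have he' : ∀ w : Y, e.symm (F w) = w := fun w => e.symm_apply_apply w
    refine ⟨⟨{ hom := FGModuleCat.ofHom einv, comm := ?_ }, ?_, ?_⟩⟩
    · intro h
      ext v
      apply e.injective
      show F (e.symm (ρ h v)) = F (Y.ρ h (e.symm v))
      rw [he, hcomm' h (e.symm v), he]
    · apply Action.hom_ext; ext v
      show e.symm (F v) = v
      exact he' v
    · apply Action.hom_ext; ext v
      show F (e.symm v) = v
      exact he v


variable {H : Type} [Monoid H]

lemma nontrivial_of_simple (X : FDRep ℂ H) [Simple X] : Nontrivial X := by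
  by_contra hns
  rw [not_nontrivial_iff_subsingleton] at hns
  apply CategoryTheory.id_nonzero X
  apply Action.hom_ext
  ext v
  exact @Subsingleton.elim _ hns _ _

lemma invariant_of_simple (X : FDRep ℂ H) [Simple X]
    (U : Submodule ℂ X) (hU : ∀ (h : H) (v : X), v ∈ U → X.ρ h v ∈ U) :
    U = ⊥ ∨ U = ⊤ := by
  by_cases hbot : U = ⊥
  · exact Or.inl hbot
  right
  let ρU : Representation ℂ H U :=
    { toFun := fun h => (X.ρ h).restrict (fun v hv => hU h v hv)
      map_one' := by ext v; simp [LinearMap.restrict_apply]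
      map_mul' := fun a b => by
        ext v
        simp only [LinearMap.restrict_coe_apply, Module.End.mul_apply, map_mul] }
  let ι : FDRep.of ρU ⟶ X := { hom := FGModuleCat.ofHom U.subtype, comm := fun h => rfl }
  have hmono : Mono ι := by
    apply Functor.mono_of_mono_map (Action.forget (FGModuleCat ℂ) (MonCat.of H))
    apply Functor.mono_of_mono_map (forget₂ (FGModuleCat ℂ) (ModuleCat ℂ))
    rw [ModuleCat.mono_iff_injective]
    exact Subtype.val_injective
  have hne : ι ≠ 0 := by
    intro h0
    apply hbot
    ext v
    simp only [Submodule.mem_bot]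
    constructor
    · intro hv
      have := congrArg (fun m : FDRep.of ρU ⟶ X => m.hom ⟨v, hv⟩) h0
      exact this
    · rintro rfl; exact U.zero_mem
  have hiso : IsIso ι := (Simple.mono_isIso_iff_nonzero ι).mpr hne
  ext v
  simp only [Submodule.mem_top, iff_true]
  have h1 : inv ι ≫ ι = 𝟙 X := IsIso.inv_hom_id ι
  have := congrArg (fun m : X ⟶ X => m.hom v) h1
  simp only [Action.comp_hom, Action.id_hom] at this
  have : U.subtype ((inv ι).hom v) = v := this
  rw [← this]
  exact ((inv ι).hom v).2


section Sep
variable {K : Type} [Group K] [Fintype K]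

set_option maxHeartbeats 1000000 in
lemma simple_submodule_ann (a : MonoidAlgebra ℂ K) (c : K → ℂ)
    (hac : a = ∑ g : K, MonoidAlgebra.single g (c g))
    (hcentral : ∀ r : MonoidAlgebra ℂ K, a * r = r * a)
    (htr : ∀ τ : FDRep ℂ K, Simple τ → ∑ g : K, c g * τ.character g = 0)
    (W : Submodule (MonoidAlgebra ℂ K) (MonoidAlgebra ℂ K))
    (hW : IsSimpleModule (MonoidAlgebra ℂ K) W) :
    ∀ w ∈ W, a * w = 0 := by
  classical
  haveI : FiniteDimensional ℂ (MonoidAlgebra ℂ K) := Module.Finite.equiv ((Finsupp.linearEquivFunOnFinite ℂ ℂ K).symm.trans (MonoidAlgebra.coeffLinearEquiv ℂ).symm)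
  haveI : FiniteDimensional ℂ W := inferInstanceAs (FiniteDimensional ℂ (Submodule.restrictScalars ℂ W))
  haveI : Nontrivial W := @IsSimpleModule.nontrivial (MonoidAlgebra ℂ K) _ W _ _ hW
  -- the representation of K on W
  let ρW : Representation ℂ K W :=
    { toFun := fun g =>
        { toFun := fun w => (MonoidAlgebra.single g (1:ℂ) : MonoidAlgebra ℂ K) • w
          map_add' := fun w₁ w₂ => smul_add _ _ _
          map_smul' := fun r w => Subtype.ext (by
            change (MonoidAlgebra.single g (1:ℂ) : MonoidAlgebra ℂ K) * (r • (w : MonoidAlgebra ℂ K)) = r • ((MonoidAlgebra.single g (1:ℂ) : MonoidAlgebra ℂ K) * (w : MonoidAlgebra ℂ K))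
            exact mul_smul_comm r _ _) }
      map_one' := LinearMap.ext fun w => by
        show (MonoidAlgebra.single (1:K) (1:ℂ) : MonoidAlgebra ℂ K) • w = w
        rw [show (MonoidAlgebra.single (1:K) (1:ℂ) : MonoidAlgebra ℂ K) = 1 from rfl, one_smul]
      map_mul' := fun g h => LinearMap.ext fun w => by
        show (MonoidAlgebra.single (g*h) (1:ℂ) : MonoidAlgebra ℂ K) • w
          = (MonoidAlgebra.single g (1:ℂ) : MonoidAlgebra ℂ K) • ((MonoidAlgebra.single h (1:ℂ) : MonoidAlgebra ℂ K) • w)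
        rw [← mul_smul, MonoidAlgebra.single_mul_single, one_mul] }
  have hρW : ∀ (g : K) (w : W), (ρW g w : MonoidAlgebra ℂ K) = (MonoidAlgebra.single g (1:ℂ) : MonoidAlgebra ℂ K) * (w : MonoidAlgebra ℂ K) := fun g w => rfl
  -- the representation is simple
  haveI hsimple : Simple (FDRep.of ρW) := by
    apply simple_of_invariant
    intro U hU
    let U' : Submodule (MonoidAlgebra ℂ K) W :=
      { carrier := U
        add_mem' := fun h1 h2 => U.add_mem h1 h2
        zero_mem' := U.zero_mem
        smul_mem' := by
          intro r u hu
          induction r using MonoidAlgebra.induction_on with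
          | of g =>
            have : (MonoidAlgebra.of ℂ K g : MonoidAlgebra ℂ K) • u = ρW g u := by
              apply Subtype.ext
              rw [hρW]
              rfl
            rw [this]
            exact hU g u hu
          | add f g hf hg => rw [add_smul]; exact U.add_mem hf hg
          | smul r f hf => rw [smul_assoc]; exact U.smul_mem r hf }
    rcases hW.1.2 U' with h | h
    · left
      ext v
      rw [show (v ∈ U) = (v ∈ U') from rfl, h]
      simp [Submodule.mem_bot]
    · right
      ext v
      rw [show (v ∈ U) = (v ∈ U') from rfl, h]
      simp
  -- ℂ-linear action of a on W
  let ℓ : W →ₗ[ℂ] W :=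
    { toFun := fun w => ⟨a * (w : MonoidAlgebra ℂ K), by simpa using W.smul_mem a w.2⟩
      map_add' := fun w₁ w₂ => Subtype.ext (by simp [mul_add])
      map_smul' := fun r w => Subtype.ext (by simp [mul_smul_comm]) }
  -- ℓ equals the sum ∑ c g • ρW g
  have hℓ : ℓ = ∑ g : K, c g • (ρW g : W →ₗ[ℂ] W) := by
    apply LinearMap.ext
    intro w
    apply Subtype.ext
    change a * (w : MonoidAlgebra ℂ K) = _
    rw [hac, Finset.sum_mul]
    have : ((∑ g : K, c g • (ρW g : W →ₗ[ℂ] W)) w : MonoidAlgebra ℂ K)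
        = ∑ g : K, c g • ((MonoidAlgebra.single g (1:ℂ) : MonoidAlgebra ℂ K) * (w : MonoidAlgebra ℂ K)) := by
      rw [LinearMap.sum_apply]
      rw [Submodule.coe_sum]
      apply Finset.sum_congr rfl
      intro g _
      rw [LinearMap.smul_apply, Submodule.coe_smul_of_tower, hρW]
    rw [this]
    apply Finset.sum_congr rfl
    intro g _
    rw [← smul_mul_assoc, MonoidAlgebra.smul_single', mul_one]
  -- trace of ℓ is zero
  have htrace : LinearMap.trace ℂ W ℓ = 0 := by
    rw [hℓ, map_sum]
    have : ∀ g : K, LinearMap.trace ℂ W (c g • (ρW g : W →ₗ[ℂ] W)) = c g * (FDRep.of ρW).character g := by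
      intro g
      rw [map_smul]
      rfl
    simp only [this]
    exact htr (FDRep.of ρW) hsimple
  -- Schur: ℓ is A-linear, hence scalar, hence zero
  obtain ⟨μ, hμ⟩ := Module.End.exists_eigenvalue (ℓ : Module.End ℂ W)
  obtain ⟨v, hv⟩ := hμ.exists_hasEigenvector
  let d : W →ₗ[MonoidAlgebra ℂ K] W :=
    { toFun := fun w => ℓ w - μ • w
      map_add' := fun w₁ w₂ => by
        simp only [map_add, smul_add]
        abel
      map_smul' := fun r w => by
        simp only [RingHom.id_apply, smul_sub]
        congr 1
        · apply Subtype.ext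
          change a * (r * (w : MonoidAlgebra ℂ K)) = r * (a * (w : MonoidAlgebra ℂ K))
          rw [← mul_assoc, hcentral r, mul_assoc]
        · apply Subtype.ext
          change (μ • (r • w) : W).val = (r • (μ • w) : W).val
          rw [smul_comm] }
  have hd0 : d = 0 := by
    rcases LinearMap.injective_or_eq_zero d with h | h
    · exfalso
      have : d v = 0 := by
        change ℓ v - μ • v = 0
        rw [hv.apply_eq_smul, sub_self]
      have hv0 : v = 0 := by
        apply h
        rw [this, map_zero]
      exact hv.2 hv0
    · exact h
  -- hence ℓ = μ • id, trace gives μ = 0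
  have hℓμ : ∀ w : W, ℓ w = μ • w := by
    intro w
    have := congrArg (fun m : W →ₗ[MonoidAlgebra ℂ K] W => m w) hd0
    simp only [LinearMap.zero_apply] at this
    have : ℓ w - μ • w = 0 := this
    linear_combination (norm := module) this
  have hμ0 : μ = 0 := by
    have h1 : ℓ = μ • (LinearMap.id : W →ₗ[ℂ] W) := by
      ext w; rw [hℓμ]; rfl
    rw [h1, map_smul, LinearMap.trace_id] at htrace
    have hrank : (Module.finrank ℂ W : ℂ) ≠ 0 := by
      exact_mod_cast Module.finrank_pos.ne'
    rcases mul_eq_zero.mp htrace with h | h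
    · exact h
    · exact absurd h hrank
  intro w hw
  have h5 := hℓμ ⟨w, hw⟩
  rw [hμ0, zero_smul] at h5
  have h6 := congrArg Subtype.val h5
  exact h6



set_option maxHeartbeats 1000000 in
lemma char_separates (x y : K)
    (hχ : ∀ τ : FDRep ℂ K, Simple τ → τ.character x = τ.character y) :
    IsConj x y := by
  classical
  by_contra hnc
  haveI : NeZero ((Fintype.card K : ℂ)) := ⟨Nat.cast_ne_zero.2 Fintype.card_ne_zero⟩
  set A := MonoidAlgebra ℂ K with hA
  set cx : ℂ := ((Finset.univ.filter (fun g => IsConj x g)).card : ℂ) with hcx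
  set cy : ℂ := ((Finset.univ.filter (fun g => IsConj y g)).card : ℂ) with hcy
  set c : K → ℂ := fun g => if IsConj x g then cy else if IsConj y g then -cx else 0 with hc
  have hclass : ∀ (h g : K), c (h * g * h⁻¹) = c g := by
    intro h g
    have hgc : IsConj g (h * g * h⁻¹) := isConj_iff.mpr ⟨h, rfl⟩
    have e1 : IsConj x (h * g * h⁻¹) = IsConj x g :=
      propext ⟨fun H => H.trans hgc.symm, fun H => H.trans hgc⟩
    have e2 : IsConj y (h * g * h⁻¹) = IsConj y g :=
      propext ⟨fun H => H.trans hgc.symm, fun H => H.trans hgc⟩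
    simp only [hc, e1, e2]
  set a : A := ∑ g : K, MonoidAlgebra.single g (c g) with ha
  -- a is central
  have hcomm1 : ∀ h : K, (MonoidAlgebra.single h (1:ℂ) : A) * a = a * MonoidAlgebra.single h 1 := by
    intro h
    rw [ha, Finset.mul_sum, Finset.sum_mul]
    have lhs : ∀ g : K, (MonoidAlgebra.single h (1:ℂ) : A) * MonoidAlgebra.single g (c g)
        = MonoidAlgebra.single (h * g) (c g) := by
      intro g; rw [MonoidAlgebra.single_mul_single, one_mul]
    have rhs : ∀ g : K, (MonoidAlgebra.single g (c g) : A) * MonoidAlgebra.single h 1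
        = MonoidAlgebra.single (g * h) (c g) := by
      intro g; rw [MonoidAlgebra.single_mul_single, mul_one]
    simp only [lhs, rhs]
    apply Fintype.sum_equiv ((Equiv.mulLeft h).trans (Equiv.mulRight h⁻¹))
    intro g
    simp only [Equiv.trans_apply, Equiv.coe_mulRight, Equiv.coe_mulLeft]
    have h1 : h * g * h⁻¹ * h = h * g := by group
    rw [h1, hclass h g]
  have hcentral : ∀ r : A, a * r = r * a := by
    intro r
    induction r using MonoidAlgebra.induction_on with
    | of g => exact (hcomm1 g).symm
    | add f g hf hg => rw [mul_add, add_mul, hf, hg]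
    | smul r f hf => rw [mul_smul_comm, smul_mul_assoc, hf]
  -- coefficient of a at x
  have hax : a.coeff x = cy := by
    rw [ha]
    rw [MonoidAlgebra.coeff_sum, Finsupp.finset_sum_apply]
    have : ∀ g : K, (MonoidAlgebra.single g (c g) : A).coeff x = if g = x then c g else 0 := by
      intro g; exact Finsupp.single_apply
    simp only [this]
    rw [Finset.sum_ite_eq' Finset.univ x (fun g => c g)]
    simp only [Finset.mem_univ, if_true]
    show c x = cy
    rw [hc]
    exact if_pos (IsConj.refl x)
  have hcy0 : cy ≠ 0 := by
    rw [hcy]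
    rw [Nat.cast_ne_zero]
    apply Finset.card_ne_zero_of_mem (a := y)
    exact Finset.mem_filter.mpr ⟨Finset.mem_univ y, IsConj.refl y⟩
  have hane : a ≠ 0 := fun h0 => hcy0 (by rw [← hax, h0]; rfl)
  -- the trace condition
  have htr : ∀ τ : FDRep ℂ K, Simple τ → ∑ g : K, c g * τ.character g = 0 := by
    intro τ hτ
    have hconjx : ∀ g : K, IsConj x g → τ.character g = τ.character x := by
      intro g hg
      obtain ⟨u, hu⟩ := isConj_iff.mp hg
      rw [← hu, FDRep.char_conj]
    have hconjy : ∀ g : K, IsConj y g → τ.character g = τ.character y := by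
      intro g hg
      obtain ⟨u, hu⟩ := isConj_iff.mp hg
      rw [← hu, FDRep.char_conj]
    have key : ∀ g : K, c g * τ.character g
        = (if IsConj x g then cy * τ.character x else 0)
          + (if IsConj y g then -(cx * τ.character y) else 0) := by
      intro g
      by_cases h1 : IsConj x g
      · have h2 : ¬ IsConj y g := fun h2 => hnc (h1.trans h2.symm)
        rw [if_pos h1, if_neg h2, add_zero, hconjx g h1]
        rw [hc]
        simp only [if_pos h1]
      · by_cases h2 : IsConj y g
        · rw [if_neg h1, if_pos h2, zero_add, hconjy g h2]
          rw [hc]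
          simp only [if_neg h1, if_pos h2]
          ring
        · rw [if_neg h1, if_neg h2, add_zero, hc]
          simp only [if_neg h1, if_neg h2, zero_mul]
    rw [Finset.sum_congr rfl (fun g _ => key g), Finset.sum_add_distrib]
    have e1 : (∑ g : K, if IsConj x g then cy * τ.character x else 0)
        = cx * (cy * τ.character x) := by
      rw [Finset.sum_ite, Finset.sum_const, Finset.sum_const_zero, add_zero, nsmul_eq_mul, hcx]
    have e2 : (∑ g : K, if IsConj y g then -(cx * τ.character y) else 0)
        = cy * (-(cx * τ.character y)) := by
      rw [Finset.sum_ite, Finset.sum_const, Finset.sum_const_zero, add_zero, nsmul_eq_mul, hcy]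
    rw [e1, e2, hχ τ hτ]
    ring
  -- the annihilator submodule
  let S : Submodule (MonoidAlgebra ℂ K) (MonoidAlgebra ℂ K) :=
    { carrier := {m | a * m = 0}
      add_mem' := fun h1 h2 => by simp only [Set.mem_setOf_eq] at *; rw [mul_add, h1, h2, add_zero]
      zero_mem' := by simp
      smul_mem' := by
        intro r m hm
        simp only [Set.mem_setOf_eq] at *
        rw [smul_eq_mul, ← mul_assoc, hcentral r, mul_assoc, hm, mul_zero] }
  have htop : (⊤ : Submodule (MonoidAlgebra ℂ K) (MonoidAlgebra ℂ K)) ≤ S := by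
    rw [← IsSemisimpleModule.sSup_simples_eq_top (MonoidAlgebra ℂ K) (MonoidAlgebra ℂ K)]
    apply sSup_le
    intro W hW
    intro w hw
    exact simple_submodule_ann a c ha hcentral htr W hW w hw
  have h1S : (1 : MonoidAlgebra ℂ K) ∈ S := htop Submodule.mem_top
  apply hane
  have : a * 1 = 0 := h1S
  rwa [mul_one] at this

end Sep

end Aux

section Main

/-- Transitivity of admissibility: if `G₀ ⊆ G₁ ⊆ G`, `(G₁, G₀)` is admissible and
`(G, G₁)` is admissible, then `(G, G₀)` is admissible. -/
theorem isAdmissiblePair_trans (G : Type) [Group G] [Fintype G]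
    (G₀ G₁ : Subgroup G) (h01 : G₀ ≤ G₁)
    (h₁ : IsAdmissiblePair G₁ (G₀.subgroupOf G₁))
    (h₂ : IsAdmissiblePair G G₁) :
    IsAdmissiblePair G G₀ := by
  intro τ hτ g s hs
  haveI := hτ
  haveI : Fintype ↥G₁ := Fintype.ofFinite _
  have hxmem : (g : G) ∈ G₁ := h01 g.2
  set x : ↥G₁ := ⟨(g : G), hxmem⟩ with hxdef
  have hyG1 : s * (x : G) * s⁻¹ ∈ G₁ := h01 hs
  set y : ↥G₁ := ⟨s * (g : G) * s⁻¹, hyG1⟩ with hydef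
  have hsep : IsConj x y := by
    apply char_separates
    intro σ hσ
    exact (h₂ σ hσ x s hyG1).symm
  obtain ⟨t, ht⟩ := isConj_iff.mp hsep
  -- transport τ to a representation of G₀.subgroupOf G₁
  let e := Subgroup.subgroupOfEquivOfLe h01
  let ρ' : Representation ℂ ↥(G₀.subgroupOf G₁) τ := τ.ρ.comp e.toMonoidHom
  haveI : Nontrivial τ := nontrivial_of_simple τ
  have hsim' : Simple (FDRep.of ρ') := by
    apply simple_of_invariant
    intro U hU
    apply invariant_of_simple τ U
    intro h v hv
    have h2 := hU (e.symm h) v hv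
    have h3 : ρ' (e.symm h) = τ.ρ h := by
      show τ.ρ (e (e.symm h)) = τ.ρ h
      rw [e.apply_symm_apply]
    rwa [h3] at h2
  have hg' : x ∈ G₀.subgroupOf G₁ := by
    rw [Subgroup.mem_subgroupOf]
    exact g.2
  have hty : t * x * t⁻¹ ∈ G₀.subgroupOf G₁ := by
    rw [ht, Subgroup.mem_subgroupOf]
    exact hs
  have key := h₁ (FDRep.of ρ') hsim' ⟨x, hg'⟩ t hty
  have hchar : ∀ u : ↥(G₀.subgroupOf G₁), (FDRep.of ρ').character u = τ.character (e u) :=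
    fun u => rfl
  rw [hchar, hchar] at key
  have he1 : e ⟨t * x * t⁻¹, hty⟩ = ⟨s * (g : G) * s⁻¹, hs⟩ := by
    apply Subtype.ext
    have : ((t * x * t⁻¹ : ↥G₁) : G) = ((y : ↥G₁) : G) := congrArg _ ht
    simpa [e, Subgroup.subgroupOfEquivOfLe] using this
  have he2 : e ⟨x, hg'⟩ = g := by
    apply Subtype.ext
    simp [e, Subgroup.subgroupOfEquivOfLe, x]
  rw [he1, he2] at key
  exact key

end Main
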